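/- Let K ⊆ ℝ be a compact interval with length L := Leb(K), let d ∈ ℕ, let D₁ ≥ D₂ ≥ … ≥ D_d > 0, and suppose 0 < δ ≤ min{D_d/10, L/10}. Then cov( (DCF_{d,D}(K), d_DCF), δ ) ≤ ( (2L/δ)·(2D₁/δ)·(2D₂/δ)²·(2D₃/δ)⁴·…·(2D_d/δ)^{2^{d−1}} )². -/

import Mathlib

open scoped ENNReal

/-- The `δ`-covering number of a set `A` with respect to a pseudometric `ρ`:
the least cardinality of a finite `F ⊆ A` whose open `δ`-balls cover `A`. -/
noncomputable def covN {X : Type*} (A : Set X) (ρ : X → X → ℝ) (δ : ℝ) : ℕ∞ :=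
  sInf {n : ℕ∞ | ∃ F : Finset X, ↑F ⊆ A ∧ (F.card : ℕ∞) = n ∧
    ∀ a ∈ A, ∃ b ∈ F, ρ b a < δ}

/-- The set `DCF_{d,D}(K)` of discrete Cantor families of depth `d`:
families `(K_ω)_{ω∈{0,1}^d}` of pairwise-disjoint nonempty compact subintervals of
`K = [a,b]` with gap upper bounds `D`; an interval is encoded by its pair of
endpoints. -/
def DCFset (a b : ℝ) (d : ℕ) (D : Fin d → ℝ) : Set ((Fin d → Bool) → ℝ × ℝ) :=
  {e | (∀ ω, (e ω).1 ≤ (e ω).2) ∧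
    (∀ ω, Set.Icc (e ω).1 (e ω).2 ⊆ Set.Icc a b) ∧
    (∀ ω ω' : Fin d → Bool, ω ≠ ω' →
      Disjoint (Set.Icc (e ω).1 (e ω).2) (Set.Icc (e ω').1 (e ω').2)) ∧
    ∀ (i : ℕ) (hi : i < d), ∀ ω ω' : Fin d → Bool,
      (∀ j : Fin d, (j : ℕ) < i → ω j = ω' j) →
      Metric.diam (Set.Icc (e ω).1 (e ω).2 ∪ Set.Icc (e ω').1 (e ω').2) ≤ D ⟨i, hi⟩}

/-- The sup-of-Hausdorff-distances metric on families of compact intervals indexed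
by `{0,1}^d`. -/
noncomputable def dDCF {d : ℕ} (e e' : (Fin d → Bool) → ℝ × ℝ) : ℝ :=
  Finset.univ.sup' Finset.univ_nonempty
    (fun ω : Fin d → Bool =>
      Metric.hausdorffDist (Set.Icc (e ω).1 (e ω).2) (Set.Icc (e' ω).1 (e' ω).2))

lemma covN_le_of_encode {X ι : Type*} (A : Set X) (ρ : X → X → ℝ) (δ : ℝ)
    (S : Finset ι) (Φ : X → ι) (hΦ : ∀ e ∈ A, Φ e ∈ S)
    (hfib : ∀ e ∈ A, ∀ e' ∈ A, Φ e = Φ e' → ρ e e' < δ) :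
    covN A ρ δ ≤ (S.card : ℕ∞) := by
  classical
  rcases A.eq_empty_or_nonempty with h | ⟨a0, ha0⟩
  · have h0 : (0 : ℕ∞) ∈ {n : ℕ∞ | ∃ F : Finset X, ↑F ⊆ A ∧ (F.card : ℕ∞) = n ∧
      ∀ a ∈ A, ∃ b ∈ F, ρ b a < δ} := ⟨∅, by simp, by simp, by simp [h]⟩
    exact le_trans (sInf_le h0) zero_le
  · set rep : ι → X := fun s => if h : ∃ e ∈ A, Φ e = s then h.choose else a0 with hrep
    have hrepA : ∀ s, rep s ∈ A := by
      intro s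
      by_cases hex : ∃ e ∈ A, Φ e = s
      · simp only [hrep, dif_pos hex]; exact hex.choose_spec.1
      · simp only [hrep, dif_neg hex]; exact ha0
    set T : Finset ι := S.filter (fun s => ∃ e ∈ A, Φ e = s) with hT
    set F : Finset X := T.image rep with hF
    have hcov : ∀ e ∈ A, ∃ b ∈ F, ρ b e < δ := by
      intro e he
      have hmem : Φ e ∈ T := by
        rw [hT, Finset.mem_filter]
        exact ⟨hΦ e he, e, he, rfl⟩
      refine ⟨rep (Φ e), Finset.mem_image_of_mem _ hmem, ?_⟩
      have hex : ∃ x ∈ A, Φ x = Φ e := ⟨e, he, rfl⟩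
      have h1 : Φ (rep (Φ e)) = Φ e := by
        rw [hrep]; simp only [dif_pos hex]; exact hex.choose_spec.2
      exact hfib _ (hrepA _) e he h1
    refine le_trans (sInf_le ⟨F, ?_, rfl, hcov⟩) ?_
    · intro x hx
      rcases Finset.mem_image.1 hx with ⟨s, _, rfl⟩
      exact hrepA s
    · exact_mod_cast le_trans (Finset.card_image_le) (Finset.card_filter_le _ _)

lemma floor_eq_dist_lt {δ x y : ℝ} (hδ : 0 < δ) (h : ⌊x / δ⌋ = ⌊y / δ⌋) : |x - y| < δ := by
  have h1 := Int.floor_le (x / δ)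
  have h2 := Int.lt_floor_add_one (x / δ)
  have h3 := Int.floor_le (y / δ)
  have h4 := Int.lt_floor_add_one (y / δ)
  rw [h] at h1 h2
  rw [abs_lt]
  constructor
  · have hxy : (y - x) / δ < 1 := by rw [sub_div]; linarith
    have := (div_lt_one hδ).mp hxy
    linarith
  · have hxy : (x - y) / δ < 1 := by rw [sub_div]; linarith
    exact (div_lt_one hδ).mp hxy

lemma floor_diff_le {δ x y D : ℝ} (hδ : 0 < δ) (h : x - y ≤ D) :
    ⌊x / δ⌋ - ⌊y / δ⌋ ≤ ⌊D / δ⌋ + 1 := by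
  have h1 := Int.floor_le (x / δ)
  have h2 := Int.lt_floor_add_one (y / δ)
  have h3 := Int.lt_floor_add_one (D / δ)
  have hx : x / δ ≤ y / δ + D / δ := by
    rw [← add_div]
    gcongr
    linarith
  have : (⌊x / δ⌋ : ℝ) < ((⌊y / δ⌋ + ⌊D / δ⌋ + 1 : ℤ) : ℝ) + 1 := by push_cast; linarith
  have := Int.lt_iff_add_one_le.mp (by exact_mod_cast this)
  omega

lemma mem_dist_Icc {p q p' q' : ℝ} (hpq : p ≤ q) (hpq' : p' ≤ q') :
    ∀ x ∈ Set.Icc p q, ∃ y ∈ Set.Icc p' q', dist x y ≤ max |p - p'| |q - q'| := by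
  intro x hx
  refine ⟨max p' (min x q'), ⟨le_max_left _ _, max_le hpq' (min_le_right _ _)⟩, ?_⟩
  rw [Real.dist_eq]
  rcases le_total x p' with h1 | h1
  · have hy : max p' (min x q') = p' := max_eq_left (le_trans (min_le_left _ _) h1)
    rw [hy]
    refine le_trans ?_ (le_max_left _ _)
    rw [abs_sub_comm, abs_of_nonneg (by linarith)]
    have : p' - x ≤ p' - p := by linarith [hx.1]
    exact le_trans this (le_trans (le_abs_self _) (abs_sub_comm p' p ▸ le_rfl))
  · rcases le_total x q' with h2 | h2
    · have hy : max p' (min x q') = x := by rw [min_eq_left h2]; exact max_eq_right h1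
      rw [hy]
      simp only [sub_self, abs_zero, le_max_iff]
      left; exact abs_nonneg _
    · have hy : max p' (min x q') = q' := by rw [min_eq_right h2]; exact max_eq_right hpq'
      rw [hy]
      refine le_trans ?_ (le_max_right _ _)
      rw [abs_of_nonneg (by linarith)]
      have : x - q' ≤ q - q' := by linarith [hx.2]
      exact le_trans this (le_abs_self _)

lemma hausdorffDist_Icc_lt {p q p' q' δ : ℝ} (hpq : p ≤ q) (hpq' : p' ≤ q')
    (h1 : |p - p'| < δ) (h2 : |q - q'| < δ) :
    Metric.hausdorffDist (Set.Icc p q) (Set.Icc p' q') < δ := by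
  have hr : (0 : ℝ) ≤ max |p - p'| |q - q'| := le_trans (abs_nonneg _) (le_max_left _ _)
  have := Metric.hausdorffDist_le_of_mem_dist hr (mem_dist_Icc hpq hpq')
    (by
      have := mem_dist_Icc hpq' hpq
      intro x hx
      rcases this x hx with ⟨y, hy, hd⟩
      refine ⟨y, hy, ?_⟩
      rwa [abs_sub_comm p' p, abs_sub_comm q' q] at hd)
  exact lt_of_le_of_lt this (max_lt h1 h2)
section DCFaux

variable {d : ℕ}

/-- Support of a binary word. -/
def sset (ω : Fin d → Bool) : Finset (Fin d) := Finset.univ.filter (fun j => ω j = true)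

lemma sset_nonempty {ω : Fin d → Bool} (h : ω ≠ (fun _ => false)) : (sset ω).Nonempty := by
  by_contra hc
  apply h
  funext j
  rw [Finset.not_nonempty_iff_eq_empty, sset, Finset.filter_eq_empty_iff] at hc
  have := hc (Finset.mem_univ j)
  simpa using this

/-- Top (largest) index of a word, junk value for the zero word. -/
def topIdx (hd : 0 < d) (ω : Fin d → Bool) : Fin d :=
  if h : (sset ω).Nonempty then (sset ω).max' h else ⟨0, hd⟩

lemma top_mem (hd : 0 < d) {ω : Fin d → Bool} (h : ω ≠ (fun _ => false)) :
    ω (topIdx hd ω) = true := by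
  rw [topIdx, dif_pos (sset_nonempty h)]
  have := Finset.max'_mem (sset ω) (sset_nonempty h)
  simpa [sset] using this

lemma top_max (hd : 0 < d) {ω : Fin d → Bool} (h : ω ≠ (fun _ => false))
    {j : Fin d} (hj : topIdx hd ω < j) : ω j = false := by
  by_contra hc
  have hj' : j ∈ sset ω := by simp [sset, Bool.not_eq_false] at hc ⊢; exact hc
  have := Finset.le_max' (sset ω) j hj'
  rw [topIdx, dif_pos (sset_nonempty h)] at hj
  exact absurd (lt_of_lt_of_le hj this) (lt_irrefl _)

/-- Clear the top bit. -/
def par (hd : 0 < d) (ω : Fin d → Bool) : Fin d → Bool :=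
  fun j => if j = topIdx hd ω then false else ω j

lemma par_card_lt (hd : 0 < d) {ω : Fin d → Bool} (h : ω ≠ (fun _ => false)) :
    (sset (par hd ω)).card < (sset ω).card := by
  have htop : topIdx hd ω ∈ sset ω := by
    simp [sset, top_mem hd h]
  have hsub : sset (par hd ω) ⊆ (sset ω).erase (topIdx hd ω) := by
    intro j hj
    simp only [sset, Finset.mem_filter, Finset.mem_univ, true_and, par] at hj
    rcases eq_or_ne j (topIdx hd ω) with rfl | hne
    · simp at hj
    · have hj : ω j = true := by simpa [hne] using hj
      exact Finset.mem_erase.2 ⟨hne, by simp [sset, hj]⟩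
  calc (sset (par hd ω)).card ≤ ((sset ω).erase (topIdx hd ω)).card :=
        Finset.card_le_card hsub
    _ = (sset ω).card - 1 := Finset.card_erase_of_mem htop
    _ < (sset ω).card := Nat.sub_lt (Finset.card_pos.2 ⟨_, htop⟩) one_pos

/-- `δ`-grid coordinates of the endpoints. -/
noncomputable def kfun (δ : ℝ) (e : (Fin d → Bool) → ℝ × ℝ) (ω : Fin d → Bool) : ℤ × ℤ :=
  (⌊(e ω).1 / δ⌋, ⌊(e ω).2 / δ⌋)

/-- The relative encoding. -/
noncomputable def Phi (a δ : ℝ) (hd : 0 < d) (e : (Fin d → Bool) → ℝ × ℝ) : (Fin d → Bool) → ℤ × ℤ :=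
  fun ω =>
    if ω = (fun _ => false) then
      ((kfun δ e ω).1 - ⌊a / δ⌋, (kfun δ e ω).2 - (kfun δ e ω).1)
    else
      ((kfun δ e ω).1 - (kfun δ e (par hd ω)).1, (kfun δ e ω).2 - (kfun δ e ω).1)

/-- Ranges for the encoding. -/
noncomputable def Rfam (a b δ : ℝ) (hd : 0 < d) (D : Fin d → ℝ) (ω : Fin d → Bool) : Finset (ℤ × ℤ) :=
  if ω = (fun _ => false) then
    (Finset.Icc 0 (⌊b / δ⌋ - ⌊a / δ⌋)) ×ˢ (Finset.Icc 0 (⌊b / δ⌋ - ⌊a / δ⌋))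
  else
    (Finset.Icc (-(⌊D (topIdx hd ω) / δ⌋ + 1)) (⌊D (topIdx hd ω) / δ⌋ + 1)) ×ˢ
      (Finset.Icc 0 (⌊D (topIdx hd ω) / δ⌋ + 1))

end DCFaux

section DCFmain

variable {d : ℕ}

lemma Phi_mem (a b δ : ℝ) (hδ : 0 < δ) (hd : 0 < d) (D : Fin d → ℝ)
    {e : (Fin d → Bool) → ℝ × ℝ} (he : e ∈ DCFset a b d D) :
    Phi a δ hd e ∈ Fintype.piFinset (Rfam a b δ hd D) := by
  classical
  rw [Fintype.mem_piFinset]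
  intro ω
  obtain ⟨h1, h2, _, h4⟩ := he
  by_cases h0 : ω = (fun _ => false)
  · have ha1 := h2 ω ⟨le_rfl, h1 ω⟩
    have ha2 := h2 ω ⟨h1 ω, le_rfl⟩
    rw [Set.mem_Icc] at ha1 ha2
    have m1 : ⌊a / δ⌋ ≤ ⌊(e ω).1 / δ⌋ := Int.floor_le_floor (by gcongr; exact ha1.1)
    have m2 : ⌊(e ω).1 / δ⌋ ≤ ⌊b / δ⌋ := Int.floor_le_floor (by gcongr; exact ha1.2)
    have m3 : ⌊a / δ⌋ ≤ ⌊(e ω).2 / δ⌋ := Int.floor_le_floor (by gcongr; exact ha2.1)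
    have m4 : ⌊(e ω).2 / δ⌋ ≤ ⌊b / δ⌋ := Int.floor_le_floor (by gcongr; exact ha2.2)
    have m5 : ⌊(e ω).1 / δ⌋ ≤ ⌊(e ω).2 / δ⌋ := Int.floor_le_floor (by gcongr; exact h1 ω)
    simp only [Phi, Rfam, if_pos h0, Finset.mem_product, Finset.mem_Icc, kfun]
    omega
  · have hagree : ∀ j : Fin d, (j : ℕ) < ((topIdx hd ω : Fin d) : ℕ) → ω j = par hd ω j := by
      intro j hj
      rw [par, if_neg]
      intro hji
      rw [hji] at hj
      exact lt_irrefl _ hj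
    have hdiam := h4 ((topIdx hd ω : Fin d) : ℕ) (topIdx hd ω).isLt ω (par hd ω) hagree
    rw [Fin.eta] at hdiam
    set U := Set.Icc (e ω).1 (e ω).2 ∪
      Set.Icc (e (par hd ω)).1 (e (par hd ω)).2 with hU
    have hbdd : Bornology.IsBounded U :=
      (Metric.isBounded_Icc _ _).union (Metric.isBounded_Icc _ _)
    have hm1 : (e ω).1 ∈ U := Or.inl ⟨le_rfl, h1 ω⟩
    have hm2 : (e ω).2 ∈ U := Or.inl ⟨h1 ω, le_rfl⟩
    have hm3 : (e (par hd ω)).1 ∈ U := Or.inr ⟨le_rfl, h1 _⟩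
    have d1 : |(e ω).1 - (e (par hd ω)).1| ≤ D (topIdx hd ω) := by
      have := Metric.dist_le_diam_of_mem hbdd hm1 hm3
      rw [Real.dist_eq] at this
      exact this.trans hdiam
    have d2 : |(e ω).2 - (e ω).1| ≤ D (topIdx hd ω) := by
      have := Metric.dist_le_diam_of_mem hbdd hm2 hm1
      rw [Real.dist_eq] at this
      exact this.trans hdiam
    have c1 : ⌊(e ω).1 / δ⌋ - ⌊(e (par hd ω)).1 / δ⌋ ≤ ⌊D (topIdx hd ω) / δ⌋ + 1 :=
      floor_diff_le hδ (by linarith [(abs_le.mp d1).2])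
    have c2 : ⌊(e (par hd ω)).1 / δ⌋ - ⌊(e ω).1 / δ⌋ ≤ ⌊D (topIdx hd ω) / δ⌋ + 1 :=
      floor_diff_le hδ (by linarith [(abs_le.mp d1).1])
    have c3 : ⌊(e ω).1 / δ⌋ ≤ ⌊(e ω).2 / δ⌋ := Int.floor_le_floor (by gcongr; exact h1 ω)
    have c4 : ⌊(e ω).2 / δ⌋ - ⌊(e ω).1 / δ⌋ ≤ ⌊D (topIdx hd ω) / δ⌋ + 1 :=
      floor_diff_le hδ (by linarith [(abs_le.mp d2).2])
    simp only [Phi, Rfam, if_neg h0, Finset.mem_product, Finset.mem_Icc, kfun]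
    omega

lemma Phi_fiber (a b δ : ℝ) (hδ : 0 < δ) (hd : 0 < d) (D : Fin d → ℝ)
    {e e' : (Fin d → Bool) → ℝ × ℝ} (he : e ∈ DCFset a b d D) (he' : e' ∈ DCFset a b d D)
    (h : Phi a δ hd e = Phi a δ hd e') : dDCF e e' < δ := by
  classical
  have hk : ∀ ω, kfun δ e ω = kfun δ e' ω := by
    suffices H : ∀ n (ω : Fin d → Bool), (sset ω).card = n → kfun δ e ω = kfun δ e' ω from
      fun ω => H _ ω rfl
    intro n
    induction n using Nat.strong_induction_on with
    | _ n IH =>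
      intro ω hn
      have hω := congrFun h ω
      by_cases h0 : ω = (fun _ => false)
      · simp only [Phi, if_pos h0, kfun, Prod.mk.injEq] at hω
        simp only [kfun, Prod.mk.injEq]
        omega
      · have hpar := IH _ (hn ▸ par_card_lt hd h0) (par hd ω) rfl
        simp only [Phi, if_neg h0, kfun, Prod.mk.injEq] at hω
        simp only [kfun, Prod.mk.injEq] at hpar ⊢
        omega
  rw [dDCF, Finset.sup'_lt_iff]
  intro ω _
  have hk1 : ⌊(e ω).1 / δ⌋ = ⌊(e' ω).1 / δ⌋ := congrArg Prod.fst (hk ω)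
  have hk2 : ⌊(e ω).2 / δ⌋ = ⌊(e' ω).2 / δ⌋ := congrArg Prod.snd (hk ω)
  exact hausdorffDist_Icc_lt (he.1 ω) (he'.1 ω) (floor_eq_dist_lt hδ hk1)
    (floor_eq_dist_lt hδ hk2)

end DCFmain

section DCFcount

variable {d : ℕ}

lemma toNat_cast_real {n : ℤ} (h : 0 ≤ n) : ((n.toNat : ℝ)) = (n : ℝ) := by
  exact_mod_cast congrArg (Int.cast : ℤ → ℝ) (Int.toNat_of_nonneg h)

lemma fiber_card_le (hd : 0 < d) (i : Fin d) :
    (((Finset.univ : Finset (Fin d → Bool)).erase (fun _ => false)).filter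
      (fun ω => topIdx hd ω = i)).card ≤ 2 ^ (i : ℕ) := by
  classical
  have hinj : Set.InjOn (fun (ω : Fin d → Bool) => fun j : Fin (i : ℕ) =>
      ω ⟨(j : ℕ), lt_trans j.isLt i.isLt⟩)
      ((((Finset.univ : Finset (Fin d → Bool)).erase (fun _ => false)).filter
        (fun ω => topIdx hd ω = i)) : Finset (Fin d → Bool)) := by
    intro ω hω ω' hω' heq
    simp only [Finset.coe_filter, Finset.mem_erase, Finset.mem_univ, and_true,
      Set.mem_setOf_eq, true_and] at hω hω'
    obtain ⟨hz, ht⟩ := hω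
    obtain ⟨hz', ht'⟩ := hω'
    funext j
    rcases lt_trichotomy (j : ℕ) (i : ℕ) with hlt | heqv | hgt
    · have := congrFun heq ⟨(j : ℕ), hlt⟩
      simpa using this
    · have hj : j = i := Fin.ext heqv
      rw [hj]
      rw [show ω i = true from ht ▸ top_mem hd hz,
        show ω' i = true from ht' ▸ top_mem hd hz']
    · have hlt1 : topIdx hd ω < j := by rw [ht]; exact hgt
      have hlt2 : topIdx hd ω' < j := by rw [ht']; exact hgt
      rw [top_max hd hz hlt1, top_max hd hz' hlt2]
  have := Finset.card_le_card_of_injOn _ (fun _ _ => Finset.mem_univ _) hinj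
  calc _ ≤ (Finset.univ : Finset (Fin (i : ℕ) → Bool)).card := this
    _ = 2 ^ (i : ℕ) := by simp [Finset.card_univ]

lemma card_S_le (a b δ : ℝ) (hδ : 0 < δ) (hd : 0 < d) (D : Fin d → ℝ)
    (hDδ : ∀ i, 10 * δ ≤ D i) (hbδ : 10 * δ ≤ b - a) :
    ((Fintype.piFinset (Rfam a b δ hd D)).card : ℝ)
      ≤ ((2 * (b - a) / δ) * ∏ i : Fin d, (2 * D i / δ) ^ (2 ^ (i : ℕ))) ^ 2 := by
  classical
  rw [Fintype.card_piFinset]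
  push_cast
  -- the zero word
  set z : Fin d → Bool := (fun _ => false) with hzdef
  rw [← Finset.mul_prod_erase Finset.univ _ (Finset.mem_univ z)]
  -- value at zero
  have hY0 : (0 : ℤ) ≤ ⌊b / δ⌋ - ⌊a / δ⌋ := by
    have : ⌊a / δ⌋ ≤ ⌊b / δ⌋ := Int.floor_le_floor (by gcongr; linarith)
    omega
  have hx10 : (10 : ℝ) ≤ (b - a) / δ := (le_div_iff₀ hδ).mpr (by linarith)
  have hz_card : ((Rfam a b δ hd D z).card : ℝ) ≤ (2 * (b - a) / δ) ^ 2 := by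
    rw [Rfam, if_pos rfl, Finset.card_product, Int.card_Icc, sub_zero]
    push_cast
    rw [toNat_cast_real (by omega)]
    have f1 : (⌊b / δ⌋ : ℝ) ≤ b / δ := Int.floor_le _
    have f2 : a / δ - 1 < (⌊a / δ⌋ : ℝ) := Int.sub_one_lt_floor _
    have hYr : ((⌊b / δ⌋ - ⌊a / δ⌋ : ℤ) : ℝ) + 1 ≤ 2 * (b - a) / δ := by
      push_cast
      have hsub : b / δ - a / δ = (b - a) / δ := by ring
      have h2 : 2 * (b - a) / δ = 2 * ((b - a) / δ) := by ring
      linarith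
    have hnn : (0 : ℝ) ≤ ((⌊b / δ⌋ - ⌊a / δ⌋ : ℤ) : ℝ) + 1 := by
      push_cast
      have : (⌊a / δ⌋ : ℝ) ≤ (⌊b / δ⌋ : ℝ) := by exact_mod_cast Int.floor_le_floor (by gcongr; linarith)
      linarith
    push_cast at hYr hnn ⊢
    rw [pow_two]
    exact mul_le_mul hYr hYr hnn (le_trans hnn hYr)
  have hprod : ∏ ω ∈ Finset.univ.erase z, ((Rfam a b δ hd D ω).card : ℝ)
      ≤ ∏ i : Fin d, ((2 * D i / δ) ^ 2) ^ (2 ^ (i : ℕ)) := by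
    rw [← Finset.prod_fiberwise_of_maps_to (g := topIdx hd) (t := Finset.univ)
      (fun ω _ => Finset.mem_univ _) (fun ω => ((Rfam a b δ hd D ω).card : ℝ))]
    apply Finset.prod_le_prod
    · intro i _
      apply Finset.prod_nonneg
      intro ω _
      positivity
    · intro i _
      have hm : (10 : ℤ) ≤ ⌊D i / δ⌋ := by
        rw [Int.le_floor]
        push_cast
        rw [le_div_iff₀ hδ]
        linarith [hDδ i]
      have hval : ∀ ω ∈ (Finset.univ.erase z).filter (fun ω => topIdx hd ω = i),
          ((Rfam a b δ hd D ω).card : ℝ)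
            = (2 * (⌊D i / δ⌋ : ℝ) + 3) * ((⌊D i / δ⌋ : ℝ) + 2) := by
        intro ω hω
        simp only [Finset.mem_filter, Finset.mem_erase] at hω
        obtain ⟨⟨hne, _⟩, ht⟩ := hω
        rw [Rfam, if_neg (hzdef ▸ hne), ht, Finset.card_product, Int.card_Icc, Int.card_Icc]
        push_cast
        rw [toNat_cast_real (by omega), toNat_cast_real (by omega)]
        push_cast
        ring
      rw [Finset.prod_congr rfl hval, Finset.prod_const]
      have hmr : (10 : ℝ) ≤ (⌊D i / δ⌋ : ℝ) := by exact_mod_cast hm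
      have hxm : ((⌊D i / δ⌋ : ℝ)) ≤ D i / δ := Int.floor_le _
      have hcc_le : (2 * (⌊D i / δ⌋ : ℝ) + 3) * ((⌊D i / δ⌋ : ℝ) + 2) ≤ (2 * D i / δ) ^ 2 := by
        have h2 : 2 * D i / δ = 2 * (D i / δ) := by ring
        rw [h2]
        nlinarith
      have hcc_nonneg : (0 : ℝ) ≤ (2 * (⌊D i / δ⌋ : ℝ) + 3) * ((⌊D i / δ⌋ : ℝ) + 2) := by
        nlinarith
      have hgg1 : (1 : ℝ) ≤ (2 * D i / δ) ^ 2 := by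
        have h2 : 2 * D i / δ = 2 * (D i / δ) := by ring
        nlinarith [le_trans hmr hxm]
      calc ((2 * (⌊D i / δ⌋ : ℝ) + 3) * ((⌊D i / δ⌋ : ℝ) + 2))
            ^ ((Finset.univ.erase z).filter (fun ω => topIdx hd ω = i)).card
          ≤ ((2 * D i / δ) ^ 2)
            ^ ((Finset.univ.erase z).filter (fun ω => topIdx hd ω = i)).card :=
            pow_le_pow_left₀ hcc_nonneg hcc_le _
        _ ≤ ((2 * D i / δ) ^ 2) ^ (2 ^ (i : ℕ)) :=
            pow_le_pow_right₀ hgg1 (hzdef ▸ fiber_card_le hd i)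
  have hRHS : ((2 * (b - a) / δ) * ∏ i : Fin d, (2 * D i / δ) ^ (2 ^ (i : ℕ))) ^ 2
      = (2 * (b - a) / δ) ^ 2 * ∏ i : Fin d, ((2 * D i / δ) ^ 2) ^ (2 ^ (i : ℕ)) := by
    rw [mul_pow, ← Finset.prod_pow]
    congr 1
    apply Finset.prod_congr rfl
    intro i _
    rw [← pow_mul, ← pow_mul, Nat.mul_comm]
  rw [hRHS]
  have hpn : (0 : ℝ) ≤ ∏ ω ∈ Finset.univ.erase z, ((Rfam a b δ hd D ω).card : ℝ) :=
    Finset.prod_nonneg fun ω _ => by positivity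
  exact mul_le_mul hz_card hprod hpn (by positivity)

end DCFcount


/-- **Bounding the number of discrete Cantor families.** -/
theorem cov_DCF_le
    (a b : ℝ) (hab : a ≤ b) (d : ℕ) (hd : 0 < d)
    (D : Fin d → ℝ) (hDpos : ∀ i, 0 < D i)
    (hDanti : ∀ i j : Fin d, i ≤ j → D j ≤ D i)
    (δ : ℝ) (hδ : 0 < δ)
    (hδD : δ ≤ D ⟨d - 1, Nat.sub_lt hd one_pos⟩ / 10)
    (hδL : δ ≤ (b - a) / 10) :
    (covN (DCFset a b d D) dDCF δ : ℝ≥0∞)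
      ≤ ENNReal.ofReal
          (((2 * (b - a) / δ) * ∏ i : Fin d, (2 * D i / δ) ^ (2 ^ (i : ℕ))) ^ 2) := by
  classical
  have hbδ : 10 * δ ≤ b - a := by
    rw [le_div_iff₀ (by norm_num : (0:ℝ) < 10)] at hδL
    linarith
  have hDδ : ∀ i, 10 * δ ≤ D i := by
    intro i
    have hle : i ≤ (⟨d - 1, Nat.sub_lt hd one_pos⟩ : Fin d) := by
      rw [Fin.le_def]
      exact Nat.le_pred_of_lt i.isLt
    have hDi := hDanti i _ hle
    rw [le_div_iff₀ (by norm_num : (0:ℝ) < 10)] at hδD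
    linarith
  have h1 : covN (DCFset a b d D) dDCF δ
      ≤ ((Fintype.piFinset (Rfam a b δ hd D)).card : ℕ∞) :=
    covN_le_of_encode _ _ _ _ (Phi a δ hd)
      (fun e he => Phi_mem a b δ hδ hd D he)
      (fun e he e' he' hh => Phi_fiber a b δ hδ hd D he he' hh)
  calc (covN (DCFset a b d D) dDCF δ : ℝ≥0∞)
      ≤ (((Fintype.piFinset (Rfam a b δ hd D)).card : ℕ∞) : ℝ≥0∞) := by exact_mod_cast h1
    _ = ((Fintype.piFinset (Rfam a b δ hd D)).card : ℝ≥0∞) := by exact_mod_cast rfl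
    _ = ENNReal.ofReal ((Fintype.piFinset (Rfam a b δ hd D)).card : ℝ) :=
        (ENNReal.ofReal_natCast _).symm
    _ ≤ _ := ENNReal.ofReal_le_ofReal (card_S_le a b δ hδ hd D hDδ hbδ)
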